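/- Let G be a unitary group action on a Hilbert space H. If f ∈ H has the property that 0 lies in the weak closure of the orbit {T^g f : g ∈ G}, then for any h ∈ H, the vector f ⊗ h ∈ H ⊗ H' has 0 in the weak closure of its orbit under the diagonal action g ↦ T^g ⊗ S^g, where S is any unitary G-action on H'. -/

import Mathlib

open RealInnerProductSpace

/-- `f` is a flight vector for the action `U`: `0` lies in the weak closure of the orbit
`{U g f : g ∈ G}`. -/
def IsFlight {G H : Type*} [NormedAddCommGroup H] [InnerProductSpace ℝ H]
    (U : G → H → H) (f : H) : Prop :=
  ∀ ε > (0 : ℝ), ∀ F : Finset H, ∃ g : G, ∀ w ∈ F, |⟪U g f, w⟫| < ε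

/-- Key auxiliary: for any element `v` of the span of elementary tensors and any `ε > 0`,
smallness of finitely many inner products `⟪T g f, a⟫` forces `|⟪U g (tmul f h), v⟫| < ε`. -/
lemma stmt_10_aux {G H H' W : Type*}
    [NormedAddCommGroup H] [InnerProductSpace ℝ H]
    [NormedAddCommGroup H'] [InnerProductSpace ℝ H']
    [NormedAddCommGroup W] [InnerProductSpace ℝ W]
    (T : G → H ≃ₗᵢ[ℝ] H) (S : G → H' ≃ₗᵢ[ℝ] H') (U : G → W ≃ₗᵢ[ℝ] W)
    (tmul : H →ₗ[ℝ] H' →ₗ[ℝ] W)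
    (htmul_inner : ∀ a c : H, ∀ b d : H', ⟪tmul a b, tmul c d⟫ = ⟪a, c⟫ * ⟪b, d⟫)
    (hdiag : ∀ g a b, U g (tmul a b) = tmul (T g a) (S g b))
    (f : H) (h : H')
    (v : W) (hv : v ∈ Submodule.span ℝ {w : W | ∃ a b, tmul a b = w}) :
    ∀ ε > (0 : ℝ), ∃ (A : Finset H) (δ : ℝ), 0 < δ ∧
      ∀ g : G, (∀ a ∈ A, |⟪(T g) f, a⟫| < δ) → |⟪U g (tmul f h), v⟫| < ε := by
  classical
  induction hv using Submodule.span_induction with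
  | mem w hw =>
    obtain ⟨a, b, rfl⟩ := hw
    intro ε hε
    refine ⟨{a}, ε / (‖h‖ * ‖b‖ + 1), by positivity, fun g hg => ?_⟩
    have h1 : |⟪(T g) f, a⟫| < ε / (‖h‖ * ‖b‖ + 1) := hg a (Finset.mem_singleton_self a)
    have h2 : |⟪(S g) h, b⟫| ≤ ‖h‖ * ‖b‖ := by
      calc |⟪(S g) h, b⟫| ≤ ‖(S g) h‖ * ‖b‖ := abs_real_inner_le_norm _ _
        _ = ‖h‖ * ‖b‖ := by rw [(S g).norm_map]
    have key : ⟪U g (tmul f h), tmul a b⟫ = ⟪(T g) f, a⟫ * ⟪(S g) h, b⟫ := by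
      rw [hdiag, htmul_inner]
    rw [key, abs_mul]
    have hK : (0:ℝ) ≤ ‖h‖ * ‖b‖ := by positivity
    have e1 : |⟪(T g) f, a⟫| * |⟪(S g) h, b⟫| ≤ |⟪(T g) f, a⟫| * (‖h‖ * ‖b‖) :=
      mul_le_mul_of_nonneg_left h2 (abs_nonneg _)
    have e2 : |⟪(T g) f, a⟫| * (‖h‖ * ‖b‖) ≤ (ε / (‖h‖ * ‖b‖ + 1)) * (‖h‖ * ‖b‖) :=
      mul_le_mul_of_nonneg_right h1.le hK
    have e3 : (ε / (‖h‖ * ‖b‖ + 1)) * (‖h‖ * ‖b‖) < (ε / (‖h‖ * ‖b‖ + 1)) * (‖h‖ * ‖b‖ + 1) :=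
      mul_lt_mul_of_pos_left (by linarith) (by positivity)
    have e4 : (ε / (‖h‖ * ‖b‖ + 1)) * (‖h‖ * ‖b‖ + 1) = ε :=
      div_mul_cancel₀ ε (by positivity)
    linarith
  | zero =>
    intro ε hε
    exact ⟨∅, 1, one_pos, fun g _ => by simpa using hε⟩
  | add x y hx hy ihx ihy =>
    intro ε hε
    obtain ⟨A₁, δ₁, hδ₁, h₁⟩ := ihx (ε / 2) (by positivity)
    obtain ⟨A₂, δ₂, hδ₂, h₂⟩ := ihy (ε / 2) (by positivity)
    refine ⟨A₁ ∪ A₂, min δ₁ δ₂, lt_min hδ₁ hδ₂, fun g hg => ?_⟩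
    have hb₁ : |⟪U g (tmul f h), x⟫| < ε / 2 :=
      h₁ g fun a ha => (hg a (Finset.mem_union_left _ ha)).trans_le (min_le_left _ _)
    have hb₂ : |⟪U g (tmul f h), y⟫| < ε / 2 :=
      h₂ g fun a ha => (hg a (Finset.mem_union_right _ ha)).trans_le (min_le_right _ _)
    calc |⟪U g (tmul f h), x + y⟫| = |⟪U g (tmul f h), x⟫ + ⟪U g (tmul f h), y⟫| := by
          rw [inner_add_right]
      _ ≤ |⟪U g (tmul f h), x⟫| + |⟪U g (tmul f h), y⟫| := abs_add_le _ _
      _ < ε / 2 + ε / 2 := add_lt_add hb₁ hb₂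
      _ = ε := by ring
  | smul c x hx ihx =>
    intro ε hε
    obtain ⟨A, δ, hδ, h₁⟩ := ihx (ε / (|c| + 1)) (by positivity)
    refine ⟨A, δ, hδ, fun g hg => ?_⟩
    have hb := h₁ g hg
    rw [real_inner_smul_right, abs_mul]
    have hc : (0:ℝ) ≤ |c| := abs_nonneg c
    have e1 : |c| * |⟪U g (tmul f h), x⟫| ≤ |c| * (ε / (|c| + 1)) :=
      mul_le_mul_of_nonneg_left hb.le hc
    have e2 : |c| * (ε / (|c| + 1)) < (|c| + 1) * (ε / (|c| + 1)) :=
      mul_lt_mul_of_pos_right (by linarith) (by positivity)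
    have e3 : (|c| + 1) * (ε / (|c| + 1)) = ε := mul_div_cancel₀ ε (by positivity)
    linarith

/-- If `0` is in the weak closure of the orbit of `f` under the unitary action `T`, then
for any `h`, the elementary tensor `f ⊗ h` is a flight vector for the diagonal action
`g ↦ T^g ⊗ S^g` on the Hilbert tensor product (modelled abstractly by a bilinear map
`tmul` with `⟪a⊗b, c⊗d⟫ = ⟪a,c⟫⟪b,d⟫` and dense span of elementary tensors). -/
theorem stmt_10 {G H H' W : Type*} [Group G]
    [NormedAddCommGroup H] [InnerProductSpace ℝ H]
    [NormedAddCommGroup H'] [InnerProductSpace ℝ H']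
    [NormedAddCommGroup W] [InnerProductSpace ℝ W]
    (T : G → H ≃ₗᵢ[ℝ] H) (S : G → H' ≃ₗᵢ[ℝ] H') (U : G → W ≃ₗᵢ[ℝ] W)
    (hT : ∀ g₁ g₂ x, T (g₁ * g₂) x = T g₁ (T g₂ x))
    (hS : ∀ g₁ g₂ x, S (g₁ * g₂) x = S g₁ (S g₂ x))
    (hU : ∀ g₁ g₂ x, U (g₁ * g₂) x = U g₁ (U g₂ x))
    (tmul : H →ₗ[ℝ] H' →ₗ[ℝ] W)
    (htmul_inner : ∀ a c : H, ∀ b d : H', ⟪tmul a b, tmul c d⟫ = ⟪a, c⟫ * ⟪b, d⟫)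
    (hdense : Dense (↑(Submodule.span ℝ {w : W | ∃ a b, tmul a b = w}) : Set W))
    (hdiag : ∀ g a b, U g (tmul a b) = tmul (T g a) (S g b))
    (f : H) (hf : IsFlight (fun g x => T g x) f) (h : H') :
    IsFlight (fun g x => U g x) (tmul f h) := by
  intro ε hε F
  -- For each w in F we get a finite set and threshold; combine by induction on F.
  have claim : ∃ (A : Finset H) (δ : ℝ), 0 < δ ∧
      ∀ g : G, (∀ a ∈ A, |⟪(T g) f, a⟫| < δ) → ∀ w ∈ F, |⟪U g (tmul f h), w⟫| < ε := by
    classical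
    induction F using Finset.induction_on with
    | empty => exact ⟨∅, 1, one_pos, fun g _ w hw => by simp at hw⟩
    | @insert w F hwF ih =>
      obtain ⟨A, δ, hδ, hA⟩ := ih
      -- approximate w by an element of the span
      set M : ℝ := ‖tmul f h‖ with hM
      have hMpos : (0:ℝ) < M + 1 := by positivity
      have hw' : w ∈ closure (↑(Submodule.span ℝ {w : W | ∃ a b, tmul a b = w}) : Set W) :=
        hdense w
      rw [Metric.mem_closure_iff] at hw'
      obtain ⟨v, hv, hdist⟩ := hw' (ε / (2 * (M + 1))) (by positivity)
      obtain ⟨A', δ', hδ', hA'⟩ := stmt_10_aux T S U tmul htmul_inner hdiag f h v hv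
        (ε / 2) (by positivity)
      refine ⟨A ∪ A', min δ δ', lt_min hδ hδ', fun g hg w' hw' => ?_⟩
      rcases Finset.mem_insert.mp hw' with rfl | hw'
      · -- the new element
        have h1 : |⟪U g (tmul f h), w' - v⟫| < ε / 2 := by
          calc |⟪U g (tmul f h), w' - v⟫| ≤ ‖U g (tmul f h)‖ * ‖w' - v‖ :=
                abs_real_inner_le_norm _ _
            _ = M * ‖w' - v‖ := by rw [(U g).norm_map]
            _ ≤ (M + 1) * ‖w' - v‖ := by
                have : (0:ℝ) ≤ ‖w' - v‖ := norm_nonneg _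
                nlinarith
            _ < (M + 1) * (ε / (2 * (M + 1))) := by
                have hd : ‖w' - v‖ < ε / (2 * (M + 1)) := by
                  simpa [dist_eq_norm] using hdist
                exact mul_lt_mul_of_pos_left hd hMpos
            _ = ε / 2 := by field_simp
        have h2 : |⟪U g (tmul f h), v⟫| < ε / 2 :=
          hA' g fun a ha =>
            (hg a (Finset.mem_union_right _ ha)).trans_le (min_le_right _ _)
        calc |⟪U g (tmul f h), w'⟫|
            = |⟪U g (tmul f h), w' - v⟫ + ⟪U g (tmul f h), v⟫| := by
              rw [← inner_add_right, sub_add_cancel]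
          _ ≤ |⟪U g (tmul f h), w' - v⟫| + |⟪U g (tmul f h), v⟫| := abs_add_le _ _
          _ < ε / 2 + ε / 2 := add_lt_add h1 h2
          _ = ε := by ring
      · exact hA g (fun a ha =>
          (hg a (Finset.mem_union_left _ ha)).trans_le (min_le_left _ _)) w' hw'
  obtain ⟨A, δ, hδ, hA⟩ := claim
  obtain ⟨g, hg⟩ := hf δ hδ A
  exact ⟨g, hA g hg⟩
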